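/- For every real number α ≥ 0, the generalized Cesàro operator of order one C = (C^(α),1) on ℓ² is hyponormal; that is, ⟨(C*C − CC*) f, f⟩ ≥ 0 for all f ∈ ℓ². -/

import Mathlib

open scoped ComplexOrder
open ContinuousLinearMap

/-- The standard orthonormal basis vectors of `ℓ² = ℓ²(ℕ, ℂ)`. -/
noncomputable def e (n : ℕ) : lp (fun _ : ℕ => ℂ) 2 := lp.single 2 n 1

open Complex Finset

noncomputable def dd (α : ℝ) (n : ℕ) : ℝ := 1 / ((n : ℝ) + 1 + α)

lemma dd_pos {α : ℝ} (hα : 0 ≤ α) (n : ℕ) : 0 < dd α n := by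
  have : (0:ℝ) < (n:ℝ) + 1 + α := by positivity
  exact div_pos one_pos this

lemma dd_eq {α : ℝ} (hα : 0 ≤ α) (n : ℕ) : ((n : ℝ) + 1 + α) * dd α n = 1 := by
  have : ((n:ℝ) + 1 + α) ≠ 0 := by positivity
  rw [dd, mul_one_div_cancel this]

lemma dd_sub {α : ℝ} (hα : 0 ≤ α) (n : ℕ) :
    dd α n - dd α (n+1) = dd α n * dd α (n+1) := by
  have h1 : ((n:ℝ) + 1 + α) ≠ 0 := by positivity
  have h2 : ((n:ℝ) + 2 + α) ≠ 0 := by positivity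
  simp only [dd, Nat.cast_add, Nat.cast_one]
  rw [div_sub_div _ _ h1 (by linarith), div_mul_div_comm]
  ring_nf

lemma sum_Ico_swap (F : ℕ → ℂ) (N : ℕ) :
    ∑ i ∈ range N, ∑ j ∈ Finset.Ico i N, F j = ∑ j ∈ range N, ((j:ℂ)+1) * F j := by
  induction N with
  | zero => simp
  | succ N ih =>
    have h1 : ∀ i ∈ range (N+1), ∑ j ∈ Finset.Ico i (N+1), F j
        = (∑ j ∈ Finset.Ico i N, F j) + F N := by
      intro i hi
      exact Finset.sum_Ico_succ_top (Nat.lt_succ_iff.mp (mem_range.mp hi)) F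
    rw [Finset.sum_congr rfl h1, Finset.sum_add_distrib, Finset.sum_range_succ _ N,
      Finset.Ico_self, Finset.sum_empty, add_zero, ih, Finset.sum_const, card_range,
      Finset.sum_range_succ]
    ring

lemma step_id (α p q A B ns nx n1 : ℝ) (hp1 : (n1+1+α)*p = 1) (hpq : p - q = p*q) :
    α*(p^2*nx + 2*(p*B)) + n1*(p^2*nx) + 2*p*(A - α*B) + p^2*nx + p*ns
      + p^2*q*(ns+nx+2*A) = (p^2+q)*(ns+nx+2*A) := by
  linear_combination (p*nx)*hp1 + ((ns+nx+2*A)*(1-p))*hpq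

lemma keyA {α : ℝ} (hα : 0 ≤ α) (c : ℕ → ℂ) (N : ℕ) :
    α * normSq (∑ j ∈ range N, (dd α j : ℂ) * c j)
      + ∑ i ∈ range N, normSq (∑ j ∈ Finset.Ico i N, (dd α j : ℂ) * c j)
    ≤ (∑ i ∈ range N, (dd α i)^2 * normSq (∑ j ∈ range (i+1), c j))
      + dd α N * normSq (∑ j ∈ range N, c j) := by
  induction N with
  | zero => simp
  | succ N ih =>
    set p := dd α N with hp
    set q := dd α (N+1) with hq
    set x := c N with hx
    set s := ∑ j ∈ range N, c j with hs
    set t := ∑ j ∈ range N, (dd α j : ℂ) * c j with ht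
    set T : ℕ → ℂ := fun i => ∑ j ∈ Finset.Ico i N, (dd α j : ℂ) * c j with hT
    -- rewrite all (N+1)-sums
    have r1 : ∑ j ∈ range (N+1), (dd α j : ℂ) * c j = t + (p:ℂ)*x := by
      rw [Finset.sum_range_succ]
    have r2 : ∀ i ∈ range (N+1), ∑ j ∈ Finset.Ico i (N+1), (dd α j : ℂ) * c j
        = T i + (p:ℂ)*x := by
      intro i hi
      exact Finset.sum_Ico_succ_top (Nat.lt_succ_iff.mp (mem_range.mp hi)) _
    have r3 : ∑ j ∈ range (N+1), c j = s + x := by rw [Finset.sum_range_succ]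
    have r2' : ∀ i ∈ range (N+1), normSq (∑ j ∈ Finset.Ico i (N+1), (dd α j : ℂ) * c j)
        = normSq (T i + (p:ℂ)*x) := fun i hi => by rw [r2 i hi]
    rw [r1, Finset.sum_congr rfl r2', Finset.sum_range_succ _ N, Finset.sum_range_succ _ N, r3]
    have hTN : T N = 0 := by simp [hT]
    -- sum of T i
    have hTsum : ∑ i ∈ range N, T i = s - (α:ℂ)*t := by
      rw [hT, sum_Ico_swap]
      have : ∀ j ∈ range N, ((j:ℂ)+1) * ((dd α j : ℂ) * c j)
          = c j - (α:ℂ) * ((dd α j : ℂ) * c j) := by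
        intro j hj
        have h1 : ((j:ℝ) + 1 + α) * dd α j = 1 := dd_eq hα j
        have h2 : ((j:ℂ)+1) * (dd α j : ℂ) = 1 - (α:ℂ) * (dd α j : ℂ) := by
          have := congrArg (Complex.ofReal) h1
          push_cast at this
          linear_combination this
        calc ((j:ℂ)+1) * ((dd α j : ℂ) * c j) = (((j:ℂ)+1) * (dd α j : ℂ)) * c j := by ring
          _ = (1 - (α:ℂ) * (dd α j : ℂ)) * c j := by rw [h2]
          _ = c j - (α:ℂ) * ((dd α j : ℂ) * c j) := by ring
      rw [Finset.sum_congr rfl this, Finset.sum_sub_distrib, ← Finset.mul_sum]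
    -- expansion of ∑ normSq (T i + p x)
    have hsum : ∑ i ∈ range N, normSq (T i + (p:ℂ)*x)
        = (∑ i ∈ range N, normSq (T i)) + (N:ℝ)*(p^2*normSq x)
          + 2*p*((s - (α:ℂ)*t) * (starRingEnd ℂ) x).re := by
      have e : ∀ i ∈ range N, normSq (T i + (p:ℂ)*x)
          = normSq (T i) + p^2*normSq x + 2*(p*((T i) * (starRingEnd ℂ) x).re) := by
        intro i _
        rw [Complex.normSq_add, normSq_mul, normSq_ofReal]
        have : T i * (starRingEnd ℂ) ((p:ℂ)*x) = (p:ℂ) * (T i * (starRingEnd ℂ) x) := by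
          rw [map_mul, Complex.conj_ofReal]; ring
        rw [this, Complex.re_ofReal_mul]
        ring
      rw [Finset.sum_congr rfl e, Finset.sum_add_distrib, Finset.sum_add_distrib,
        Finset.sum_const, card_range]
      have h2 : ∑ i ∈ range N, 2*(p*((T i) * (starRingEnd ℂ) x).re)
          = 2*p*((s - (α:ℂ)*t) * (starRingEnd ℂ) x).re := by
        have e2 : ∀ i ∈ range N, 2*(p*((T i) * (starRingEnd ℂ) x).re)
            = (2*p)*((T i) * (starRingEnd ℂ) x).re := fun i _ => by ring
        rw [Finset.sum_congr rfl e2, ← Finset.mul_sum, ← Complex.re_sum, ← Finset.sum_mul, hTsum]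
      rw [h2, nsmul_eq_mul]
    -- expand the remaining normSq terms and conclude
    have n1 : normSq (t + (p:ℂ)*x) = normSq t + p^2*normSq x + 2*(p*(t * (starRingEnd ℂ) x).re) := by
      rw [Complex.normSq_add, normSq_mul, normSq_ofReal]
      have : t * (starRingEnd ℂ) ((p:ℂ)*x) = (p:ℂ) * (t * (starRingEnd ℂ) x) := by
        rw [map_mul, Complex.conj_ofReal]; ring
      rw [this, Complex.re_ofReal_mul]; ring
    have n2 : normSq (s + x) = normSq s + normSq x + 2*(s * (starRingEnd ℂ) x).re :=
      Complex.normSq_add s x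
    have n3 : normSq (T N + (p:ℂ)*x) = p^2*normSq x := by
      rw [hTN, zero_add, normSq_mul, normSq_ofReal]; ring
    have n4 : ((s - (α:ℂ)*t) * (starRingEnd ℂ) x).re
        = (s * (starRingEnd ℂ) x).re - α*((t * (starRingEnd ℂ) x).re) := by
      rw [sub_mul, Complex.sub_re, mul_assoc, Complex.re_ofReal_mul]
    have hid := step_id α p q ((s * (starRingEnd ℂ) x).re) ((t * (starRingEnd ℂ) x).re)
      (normSq s) (normSq x) (N:ℝ) (dd_eq hα N) (dd_sub hα N)
    have hZ : 0 ≤ p^2*q*(normSq s + normSq x + 2*((s * (starRingEnd ℂ) x).re)) := by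
      rw [← n2]
      have := normSq_nonneg (s + x)
      have hq0 := (dd_pos hα (N+1)).le
      positivity
    rw [hsum, n1, n3, n2, n4, ← hp]
    nlinarith [ih, hid, hZ]

open Filter Topology


lemma coord (y : lp (fun _ : ℕ => ℂ) 2) (i : ℕ) : (inner ℂ (e i) y : ℂ) = y i := by
  rw [e, lp.inner_single_left, RCLike.inner_apply', map_one, one_mul]

lemma hnorm2 (y : lp (fun _ : ℕ => ℂ) 2) : HasSum (fun i => normSq (y i)) (‖y‖^2) := by
  have h := lp.hasSum_inner (𝕜 := ℂ) y y
  have h2 : ∀ i, (inner ℂ (y i) (y i) : ℂ) = ((normSq (y i) : ℝ) : ℂ) := fun i => by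
    rw [RCLike.inner_apply', Complex.normSq_eq_conj_mul_self]
  simp only [h2] at h
  rw [inner_self_eq_norm_sq_to_K] at h
  have h3 : HasSum (fun i => ((normSq (y i) : ℝ) : ℂ)) (((‖y‖^2 : ℝ)) : ℂ) := by
    rw [Complex.ofReal_pow]
    exact h
  exact Complex.hasSum_ofReal.mp h3

lemma finite_bound (α : ℝ) (hα : 0 ≤ α) (C : lp (fun _ : ℕ => ℂ) 2 →L[ℂ] lp (fun _ : ℕ => ℂ) 2)
    (hC : ∀ i j : ℕ, (inner ℂ (e i) (C (e j)) : ℂ) = if j ≤ i then ((dd α i : ℝ) : ℂ) else 0)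
    (c : ℕ → ℂ) (N : ℕ) :
    ‖ContinuousLinearMap.adjoint C (∑ j ∈ range N, c j • e j)‖
      ≤ ‖C (∑ j ∈ range N, c j • e j)‖ := by
  set F := ∑ j ∈ range N, c j • e j with hF
  set c' : ℕ → ℂ := fun j => if j < N then c j else 0 with hc'
  -- coordinates of C F
  have hCF : ∀ i, (C F : lp (fun _ : ℕ => ℂ) 2) i
      = ((dd α i : ℝ) : ℂ) * ∑ j ∈ range (i+1), c' j := by
    intro i
    rw [← coord (C F) i, hF, map_sum, inner_sum]
    simp only [map_smul, inner_smul_right, hC]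
    have l1 : ∀ j ∈ range N, c j * (if j ≤ i then ((dd α i:ℝ):ℂ) else 0)
        = if j ≤ i then ((dd α i:ℝ):ℂ) * c j else 0 := fun j _ => by
      split <;> ring
    rw [Finset.sum_congr rfl l1, ← Finset.sum_filter]
    have l2 : (range N).filter (fun j => j ≤ i) = (range (i+1)).filter (fun j => j < N) := by
      ext j; simp only [Finset.mem_filter, mem_range, Nat.lt_succ_iff]; omega
    rw [l2, Finset.sum_filter, Finset.mul_sum]
    refine Finset.sum_congr rfl fun j _ => ?_
    simp only [hc']
    split <;> ring
  -- coordinates of (adjoint C) F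
  have hCaF : ∀ M, N ≤ M → ∀ i, (ContinuousLinearMap.adjoint C F : lp (fun _ : ℕ => ℂ) 2) i
      = ∑ j ∈ Finset.Ico i M, ((dd α j : ℝ) : ℂ) * c' j := by
    intro M hM i
    rw [← coord _ i, ContinuousLinearMap.adjoint_inner_right, hF, inner_sum]
    simp only [inner_smul_right]
    have l0 : ∀ j, (inner ℂ (C (e i)) (e j) : ℂ) = if i ≤ j then ((dd α j:ℝ):ℂ) else 0 := by
      intro j
      rw [← inner_conj_symm, hC]
      split <;> simp [Complex.conj_ofReal]
    simp only [l0]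
    have l1 : ∀ j ∈ range N, c j * (if i ≤ j then ((dd α j:ℝ):ℂ) else 0)
        = if i ≤ j then ((dd α j:ℝ):ℂ) * c j else 0 := fun j _ => by
      split <;> ring
    rw [Finset.sum_congr rfl l1, ← Finset.sum_filter]
    have l2 : (range N).filter (fun j => i ≤ j) = (Finset.Ico i M).filter (fun j => j < N) := by
      ext j; simp only [Finset.mem_filter, mem_range, Finset.mem_Ico]; omega
    rw [l2, Finset.sum_filter]
    refine Finset.sum_congr rfl fun j _ => ?_
    simp only [hc']
    split <;> ring
  have hCa0 : ∀ i, N ≤ i → (ContinuousLinearMap.adjoint C F : lp (fun _ : ℕ => ℂ) 2) i = 0 := by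
    intro i hi
    rw [hCaF N le_rfl i, Finset.Ico_eq_empty (by omega), Finset.sum_empty]
  have hnormCa : ∀ M, N ≤ M →
      ‖ContinuousLinearMap.adjoint C F‖^2
        = ∑ i ∈ range M, normSq ((ContinuousLinearMap.adjoint C F : lp (fun _ : ℕ => ℂ) 2) i) := by
    intro M hM
    refine (hnorm2 _).unique (hasSum_sum_of_ne_finset_zero fun i hi => ?_)
    rw [hCa0 i (by simp only [mem_range, not_lt] at hi; omega)]
    simp
  have key : ∀ M, N ≤ M → ‖ContinuousLinearMap.adjoint C F‖^2
      ≤ ‖C F‖^2 + dd α M * normSq (∑ j ∈ range N, c j) := by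
    intro M hM
    have hA := keyA hα c' M
    have e1 : ∀ i ∈ range M, normSq (∑ j ∈ Finset.Ico i M, ((dd α j:ℝ):ℂ) * c' j)
        = normSq ((ContinuousLinearMap.adjoint C F : lp (fun _ : ℕ => ℂ) 2) i) :=
      fun i _ => by rw [hCaF M hM i]
    have e2 : ∀ i ∈ range M, (dd α i)^2 * normSq (∑ j ∈ range (i+1), c' j)
        = normSq ((C F : lp (fun _ : ℕ => ℂ) 2) i) := fun i _ => by
      rw [hCF i, normSq_mul, normSq_ofReal]; ring
    have e3 : ∑ j ∈ range M, c' j = ∑ j ∈ range N, c j := by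
      rw [← Finset.sum_subset (Finset.range_subset_range.mpr hM)
        (fun x _ hx => by simp only [hc', mem_range, not_lt] at hx ⊢; rw [if_neg (by omega)])]
      exact Finset.sum_congr rfl fun j hj => by
        simp only [hc', if_pos (mem_range.mp hj)]
    rw [Finset.sum_congr rfl e1, Finset.sum_congr rfl e2, e3] at hA
    have hle : ∑ i ∈ range M, normSq ((C F : lp (fun _ : ℕ => ℂ) 2) i) ≤ ‖C F‖^2 :=
      sum_le_hasSum (range M) (fun i _ => normSq_nonneg _) (hnorm2 (C F))
    have hα2 : 0 ≤ α * normSq (∑ j ∈ range M, ((dd α j:ℝ):ℂ) * c' j) :=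
      mul_nonneg hα (normSq_nonneg _)
    rw [hnormCa M hM]
    linarith
  have hd0 : Tendsto (fun M : ℕ => dd α M) atTop (𝓝 0) := by
    have h1 : Tendsto (fun M : ℕ => (M:ℝ) + 1 + α) atTop atTop :=
      tendsto_atTop_add_const_right _ α (tendsto_atTop_add_const_right _ 1
        tendsto_natCast_atTop_atTop)
    simpa [dd, one_div, Pi.inv_def] using h1.inv_tendsto_atTop
  have hsq : ‖ContinuousLinearMap.adjoint C F‖^2 ≤ ‖C F‖^2 := by
    have hl : Tendsto (fun M : ℕ => ‖C F‖^2 + dd α M * normSq (∑ j ∈ range N, c j))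
        atTop (𝓝 (‖C F‖^2)) := by
      have := (hd0.mul_const (normSq (∑ j ∈ range N, c j))).const_add (‖C F‖^2)
      simpa using this
    exact ge_of_tendsto hl (Filter.eventually_atTop.mpr ⟨N, fun M hM => key M hM⟩)
  nlinarith [norm_nonneg (C F), norm_nonneg (ContinuousLinearMap.adjoint C F), hsq]

/-- For every `α ≥ 0`, the generalized Cesàro operator of
order one is hyponormal: `⟨(C*C − CC*) f, f⟩ ≥ 0` for all `f`. -/
theorem cesaro_order_one_hyponormal (α : ℝ) (hα : 0 ≤ α)
    (C : lp (fun _ : ℕ => ℂ) 2 →L[ℂ] lp (fun _ : ℕ => ℂ) 2)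
    (hC : ∀ i j : ℕ, (inner ℂ (e i) (C (e j)) : ℂ) =
      if j ≤ i then ((1 / ((i : ℝ) + 1 + α) : ℝ) : ℂ) else 0) :
    ∀ f, 0 ≤ (inner ℂ ((adjoint C ∘L C - C ∘L adjoint C) f) f : ℂ) := by
  have hC' : ∀ i j : ℕ, (inner ℂ (e i) (C (e j)) : ℂ)
      = if j ≤ i then ((dd α i : ℝ) : ℂ) else 0 := by
    simpa [dd] using hC
  have hbound : ∀ f, ‖adjoint C f‖ ≤ ‖C f‖ := by
    intro f
    have hsingle : ∀ j : ℕ, (f j : ℂ) • e j = lp.single 2 j (f j) := by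
      intro j
      rw [e, ← lp.single_smul, smul_eq_mul, mul_one]
    have hps : Tendsto (fun N => ∑ j ∈ range N, (f j : ℂ) • e j) atTop (𝓝 f) := by
      have h := (lp.hasSum_single ENNReal.ofNat_ne_top f).tendsto_sum_nat
      simp only [hsingle]
      exact h
    have h1 : Tendsto (fun N => ‖adjoint C (∑ j ∈ range N, (f j : ℂ) • e j)‖) atTop
        (𝓝 ‖adjoint C f‖) := (((adjoint C).continuous.tendsto f).comp hps).norm
    have h2 : Tendsto (fun N => ‖C (∑ j ∈ range N, (f j : ℂ) • e j)‖) atTop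
        (𝓝 ‖C f‖) := ((C.continuous.tendsto f).comp hps).norm
    exact le_of_tendsto_of_tendsto' h1 h2 (fun N => finite_bound α hα C hC' (fun j => f j) N)
  intro f
  have hexp : (inner ℂ ((adjoint C ∘L C - C ∘L adjoint C) f) f : ℂ)
      = ((‖C f‖^2 - ‖adjoint C f‖^2 : ℝ) : ℂ) := by
    rw [ContinuousLinearMap.sub_apply, inner_sub_left, ContinuousLinearMap.comp_apply,
      ContinuousLinearMap.comp_apply, ContinuousLinearMap.adjoint_inner_left,
      show (C ((adjoint C) f)) = ((adjoint (adjoint C)) ((adjoint C) f)) from by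
        rw [adjoint_adjoint],
      ContinuousLinearMap.adjoint_inner_left, inner_self_eq_norm_sq_to_K,
      inner_self_eq_norm_sq_to_K]
    push_cast
    norm_cast
  rw [hexp]
  refine Complex.zero_le_real.mpr ?_
  have := pow_le_pow_left₀ (norm_nonneg (adjoint C f)) (hbound f) 2
  linarith
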